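/- If the core of a cooperative game is nonempty, then any payoff vector x in the set of efficient imputations that lexicographically minimizes the non-increasing sorted vector of excesses θ(x) over all efficient payoff vectors also lies in the core. -/

import Mathlib

open Finset

variable {N : Type*} [Fintype N] [DecidableEq N]

noncomputable def excess (u : Finset N → ℝ) (x : N → ℝ) (C : Finset N) : ℝ :=
  u C - ∑ i ∈ C, x i

noncomputable def theta (u : Finset N → ℝ) (x : N → ℝ) : List ℝ :=
  ((Finset.univ.powerset.val.map (excess u x)).sort (· ≤ ·)).reverse

def lexLe (a b : List ℝ) : Prop := a = b ∨ List.Lex (· < ·) a b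

lemma theta_sorted (u : Finset N → ℝ) (x : N → ℝ) :
    List.Pairwise (fun a b => b ≤ a) (theta u x) := by
  have := Multiset.pairwise_sort (Finset.univ.powerset.val.map (excess u x)) (· ≤ ·)
  unfold theta
  exact List.pairwise_reverse.mpr this

lemma mem_theta (u : Finset N → ℝ) (x : N → ℝ) (C : Finset N) :
    excess u x C ∈ theta u x := by
  unfold theta
  rw [List.mem_reverse, Multiset.mem_sort]
  exact Multiset.mem_map_of_mem _ (by
    rw [Finset.mem_val]; exact Finset.mem_powerset.mpr (Finset.subset_univ C))

lemma mem_theta' (u : Finset N → ℝ) (x : N → ℝ) {e : ℝ} (he : e ∈ theta u x) :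
    ∃ C : Finset N, e = excess u x C := by
  unfold theta at he
  rw [List.mem_reverse, Multiset.mem_sort] at he
  obtain ⟨D, _, rfl⟩ := Multiset.mem_map.mp he
  exact ⟨D, rfl⟩

theorem lexmin_mem_core_of_core_nonempty (u : Finset N → ℝ) (hu : u ∅ = 0)
    (hcore : ∃ y : N → ℝ, (∑ i, y i = u Finset.univ) ∧
      ∀ C : Finset N, u C ≤ ∑ i ∈ C, y i)
    (x : N → ℝ) (hx : ∑ i, x i = u Finset.univ)
    (hmin : ∀ y : N → ℝ, (∑ i, y i = u Finset.univ) → lexLe (theta u x) (theta u y)) :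
    ∀ C : Finset N, u C ≤ ∑ i ∈ C, x i := by
  obtain ⟨y, hy, hyC⟩ := hcore
  intro C
  -- every entry of theta u y is ≤ 0
  have hynonpos : ∀ e ∈ theta u y, e ≤ 0 := by
    intro e he
    obtain ⟨D, rfl⟩ := mem_theta' u y he
    exact sub_nonpos.mpr (hyC D)
  have hlex := hmin y hy
  have hmem := mem_theta u x C
  -- theta u x is nonempty
  obtain ⟨a, t, ha⟩ : ∃ a t, theta u x = a :: t := by
    cases h : theta u x with
    | nil => rw [h] at hmem; exact absurd hmem List.not_mem_nil
    | cons a t => exact ⟨a, t, rfl⟩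
  -- excess u x C ≤ a
  have hle_a : excess u x C ≤ a := by
    have hs := theta_sorted u x
    rw [ha] at hs hmem
    rcases List.mem_cons.mp hmem with h | h
    · exact le_of_eq h
    · exact List.rel_of_pairwise_cons hs h
  -- a ≤ head of theta u y ≤ 0
  obtain ⟨b, s, hb⟩ : ∃ b s, theta u y = b :: s := by
    cases h : theta u y with
    | nil =>
      have := mem_theta u y ∅
      rw [h] at this; exact absurd this List.not_mem_nil
    | cons b s => exact ⟨b, s, rfl⟩
  have ha0 : a ≤ 0 := by
    rcases hlex with heq | hlt
    · have : a ∈ theta u y := by rw [← heq, ha]; exact List.mem_cons_self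
      exact hynonpos a this
    · rw [ha, hb] at hlt
      cases hlt with
      | cons h =>
        exact hynonpos a (hb ▸ (List.mem_cons_self (a := a) (l := s)))
      | rel h =>
        exact le_trans (le_of_lt h) (hynonpos b (hb ▸ (List.mem_cons_self (a := b) (l := s))))
  have := le_trans hle_a ha0
  unfold excess at this
  linarith
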